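/- arXiv:1806.02625 — 2 statements merged into one kernel-verified Lean document; each statement's English description precedes it below -/
import Mathlib

section
/- Let r, s, t be positive integers. The adjacency characteristic polynomial of the multicone graph K_r ∇ sK_t equals (x + 1)^(r − 1 + s(t − 1)) · (x − (t − 1))^(s − 1) · (x² − a x + b), where a = r + t − 2 and b = (r − 1)(t − 1) − r s t. Equivalently, the adjacency spectrum of K_r ∇ sK_t consists of −1 with multiplicity r − 1 + s(t − 1), t − 1 with multiplicity s − 1, and the two roots (a ± √(a² − 4b))/2, each with multiplicity 1. -/
open SimpleGraph Polynomial

/-- The multicone graph `K_r ∇ sK_t`: the join of the complete graph on `r` vertices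
with `s` disjoint copies of the complete graph on `t` vertices. -/
def multicone (r s t : ℕ) : SimpleGraph (Fin r ⊕ Fin s × Fin t) where
  Adj v w := v ≠ w ∧ ∀ i a j b, v = Sum.inr (i, a) → w = Sum.inr (j, b) → i = j
  symm := ⟨by
    rintro v w ⟨hne, h⟩
    exact ⟨hne.symm, fun i a j b hv hw => (h j b i a hw hv).symm⟩⟩
  loopless := ⟨fun v h => h.1 rfl⟩

noncomputable instance (r s t : ℕ) : DecidableRel (multicone r s t).Adj :=
  Classical.decRel _

noncomputable instance (r s t : ℕ) : DecidableRel ((multicone r s t)ᶜ).Adj :=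
  Classical.decRel _

open Matrix
lemma detJ (n : ℕ) (hn : 1 ≤ n) (a : ℝ) (ha : a ≠ 0) :
    ((a • (1 : Matrix (Fin n) (Fin n) ℝ)) - Matrix.of (fun _ _ => (1:ℝ))).det
      = a ^ (n-1) * (a - n) := by
  have h : (a • (1 : Matrix (Fin n) (Fin n) ℝ)) - Matrix.of (fun _ _ => (1:ℝ))
      = a • (1 + Matrix.replicateCol Unit (fun _ => -a⁻¹) * Matrix.replicateRow Unit (fun _ => (1:ℝ))) := by
    ext i j
    simp [Matrix.mul_apply, Matrix.one_apply, mul_add, mul_ite, mul_inv_cancel₀ ha]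
    ring
  rw [h, Matrix.det_smul, Matrix.det_one_add_replicateCol_mul_replicateRow]
  simp only [dotProduct, Fintype.card_fin]
  rw [Finset.sum_const, Finset.card_univ, Fintype.card_fin]
  have hn' : a ^ n = a ^ (n-1) * a := by
    conv_lhs => rw [← Nat.succ_pred_eq_of_pos hn, pow_succ]
    rfl
  rw [hn']
  field_simp
  ring_nf
  rw [mul_inv_cancel₀ ha, one_mul]

namespace MC
variable (r s t : ℕ) (x : ℝ)

lemma adj_inl_inl (c d : Fin r) :
    (multicone r s t).Adj (Sum.inl c) (Sum.inl d) ↔ c ≠ d := by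
  simp [multicone]

lemma adj_inl_inr (c : Fin r) (p : Fin s × Fin t) :
    (multicone r s t).Adj (Sum.inl c) (Sum.inr p) := by
  simp [multicone]

lemma adj_inr_inl (c : Fin r) (p : Fin s × Fin t) :
    (multicone r s t).Adj (Sum.inr p) (Sum.inl c) := by
  simp [multicone]

lemma adj_inr_inr (p q : Fin s × Fin t) :
    (multicone r s t).Adj (Sum.inr p) (Sum.inr q) ↔ p ≠ q ∧ p.1 = q.1 := by
  obtain ⟨i, c⟩ := p; obtain ⟨j, d⟩ := q
  constructor
  · rintro ⟨hne, h⟩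
    exact ⟨by simpa using hne, h i c j d rfl rfl⟩
  · rintro ⟨hne, h⟩
    refine ⟨by simpa using hne, ?_⟩
    rintro i' c' j' d' h1 h2
    simp only [Sum.inr.injEq, Prod.mk.injEq] at h1 h2
    obtain ⟨rfl, rfl⟩ := h1
    obtain ⟨rfl, rfl⟩ := h2
    exact h

def Bt : Matrix (Fin t) (Fin t) ℝ := (x+1) • 1 - Matrix.of (fun _ _ => (1:ℝ))

def Dm : Matrix (Fin r ⊕ Fin s × Fin t) (Fin r ⊕ Fin s × Fin t) ℝ :=
  Matrix.fromBlocks ((x+1) • 1) 0 0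
    ((Matrix.blockDiagonal fun _ : Fin s => Bt t x).submatrix
      (Equiv.prodComm (Fin s) (Fin t)) (Equiv.prodComm (Fin s) (Fin t)))

def Um : Matrix (Fin r ⊕ Fin s × Fin t) (Fin 2) ℝ :=
  Matrix.of fun v i => if i = 0 then 1 else Sum.elim (fun _ => (1:ℝ)) (fun _ => (0:ℝ)) v

def Vm : Matrix (Fin 2) (Fin r ⊕ Fin s × Fin t) ℝ :=
  Matrix.of fun i v => if i = 0 then -(Sum.elim (fun _ => (1:ℝ)) (fun _ => (0:ℝ)) v) else -(Sum.elim (fun _ => (0:ℝ)) (fun _ => (1:ℝ)) v)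

noncomputable def Wm : Matrix (Fin r ⊕ Fin s × Fin t) (Fin 2) ℝ :=
  Matrix.of fun v i => if i = 0 then Sum.elim (fun _ => (x+1)⁻¹) (fun _ => (x+1-t)⁻¹) v
    else Sum.elim (fun _ => (x+1)⁻¹) 0 v

lemma hM : x • (1 : Matrix (Fin r ⊕ Fin s × Fin t) (Fin r ⊕ Fin s × Fin t) ℝ)
      - (multicone r s t).adjMatrix ℝ = Dm r s t x + Um r s t * Vm r s t := by
  ext v w
  simp only [Matrix.add_apply, Matrix.sub_apply, Matrix.smul_apply, Matrix.one_apply,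
    SimpleGraph.adjMatrix_apply, Matrix.mul_apply, Fin.sum_univ_two, Um, Vm,
    Matrix.of_apply, smul_eq_mul, mul_ite, mul_one, mul_zero]
  rcases v with c | ⟨i, c⟩ <;> rcases w with d | ⟨j, d⟩
  · rw [if_congr (adj_inl_inl r s t c d) rfl rfl]
    simp only [Dm, fromBlocks_apply₁₁, Matrix.add_apply, Matrix.smul_apply, Matrix.one_apply,
      Sum.elim_inl, Pi.one_apply, smul_eq_mul, mul_ite, mul_one, mul_zero]
    by_cases h : c = d <;> simp [h, Sum.inl.injEq] <;> ring
  · rw [if_pos (adj_inl_inr r s t c (j, d))]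
    simp [Dm]
  · rw [if_pos (adj_inr_inl r s t d (i, c))]
    simp [Dm]
  · rw [if_congr (adj_inr_inr r s t (i, c) (j, d)) rfl rfl]
    simp only [Dm, fromBlocks_apply₂₂, submatrix_apply, Equiv.prodComm_apply, Prod.swap_prod_mk,
      Matrix.blockDiagonal_apply, Bt, Matrix.sub_apply, Matrix.smul_apply, Matrix.one_apply,
      Matrix.of_apply, Sum.elim_inr, Pi.zero_apply, Pi.one_apply, smul_eq_mul]
    by_cases hij : i = j
    · subst hij
      by_cases hcd : c = d
      · subst hcd; simp
      · simp [hcd, Prod.mk.injEq]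
    · simp [hij, Prod.mk.injEq, Sum.inr.injEq]

lemma detBt (ht : 1 ≤ t) (hx1 : x + 1 ≠ 0) :
    (Bt t x).det = (x+1) ^ (t-1) * (x + 1 - t) := by
  have h : (Bt t x) = ((x+1) • (1 : Matrix (Fin t) (Fin t) ℝ)) - Matrix.of (fun _ _ => (1:ℝ)) := rfl
  rw [h, detJ t ht (x+1) hx1]

lemma detDm (ht : 1 ≤ t) (hx1 : x + 1 ≠ 0) :
    (Dm r s t x).det = (x+1) ^ r * ((x+1) ^ (t-1) * (x + 1 - t)) ^ s := by
  rw [Dm, Matrix.det_fromBlocks_zero₂₁, Matrix.det_submatrix_equiv_self,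
    Matrix.det_blockDiagonal]
  simp [detBt t x ht hx1, Matrix.det_smul, Finset.prod_const]

lemma detDm_unit (ht : 1 ≤ t) (hx1 : x + 1 ≠ 0) (hx2 : x + 1 - t ≠ 0) :
    IsUnit (Dm r s t x).det := by
  rw [detDm r s t x ht hx1, isUnit_iff_ne_zero]
  positivity

lemma hDW (hx1 : x + 1 ≠ 0) (hx2 : x + 1 - t ≠ 0) :
    Dm r s t x * Wm r s t x = Um r s t := by
  ext v i
  rw [Matrix.mul_apply, Fintype.sum_sum_type]
  rcases v with c | ⟨i0, c⟩
  · simp only [Dm, Wm, Um, fromBlocks_apply₁₁, fromBlocks_apply₁₂, Matrix.smul_apply,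
      Matrix.one_apply, Matrix.zero_apply, Matrix.of_apply, smul_eq_mul, mul_ite, mul_zero,
      mul_one, ite_mul, zero_mul, Finset.sum_ite_eq, Finset.mem_univ, if_true,
      Finset.sum_const_zero, add_zero, Sum.elim_inl]
    fin_cases i <;> simp [mul_inv_cancel₀ hx1]
  · simp only [Dm, Wm, Um, fromBlocks_apply₂₁, fromBlocks_apply₂₂, Matrix.zero_apply,
      Matrix.submatrix_apply, Equiv.prodComm_apply, Prod.swap_prod_mk,
      Matrix.blockDiagonal_apply, Matrix.of_apply, zero_mul, Finset.sum_const_zero, zero_add,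
      Sum.elim_inr]
    rw [Fintype.sum_prod_type]
    simp only [Prod.swap_prod_mk]
    fin_cases i <;> simp only [Fin.isValue, Fin.zero_eta, Fin.mk_one, reduceIte,
      one_ne_zero, if_false, if_true]
    · have : ∀ j : Fin s, ∑ d : Fin t, (if i0 = j then Bt t x c d else 0) * (x + 1 - (t:ℝ))⁻¹
          = if i0 = j then (x + 1 - t) * (x + 1 - t)⁻¹ else 0 := by
        intro j
        by_cases h : i0 = j
        · simp only [h, if_true, ← Finset.sum_mul]
          congr 1
          simp [Bt, Matrix.sub_apply, Matrix.smul_apply, Matrix.one_apply, smul_eq_mul,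
            mul_ite, mul_one, mul_zero, Finset.sum_sub_distrib, Finset.sum_ite_eq,
            Finset.card_univ]
        · simp [h]
      rw [Finset.sum_congr rfl fun j _ => this j]
      simp [Finset.sum_ite_eq, mul_inv_cancel₀ hx2]
    · simp

lemma hE (ht : 1 ≤ t) (hx1 : x + 1 ≠ 0) (hx2 : x + 1 - t ≠ 0) :
    (1 : Matrix (Fin 2) (Fin 2) ℝ) + Vm r s t * (Dm r s t x)⁻¹ * Um r s t
      = !![1 - r * (x+1)⁻¹, -(r * (x+1)⁻¹); -((s*t : ℝ) * (x+1-t)⁻¹), 1] := by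
  have h1 : (Dm r s t x)⁻¹ * Um r s t = Wm r s t x := by
    rw [← hDW r s t x hx1 hx2,
      Matrix.nonsing_inv_mul_cancel_left _ _ (detDm_unit r s t x ht hx1 hx2)]
  rw [Matrix.mul_assoc, h1]
  ext i j
  rw [Matrix.add_apply, Matrix.mul_apply, Fintype.sum_sum_type]
  fin_cases i <;> fin_cases j <;>
    simp [Vm, Wm, Matrix.one_apply, Finset.sum_const, Finset.card_univ] <;> ring

lemma det_eval (hr : 1 ≤ r) (hs : 1 ≤ s) (ht : 1 ≤ t)
    (hx1 : x + 1 ≠ 0) (hx2 : x + 1 - t ≠ 0) :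
    (x • (1 : Matrix (Fin r ⊕ Fin s × Fin t) (Fin r ⊕ Fin s × Fin t) ℝ)
        - (multicone r s t).adjMatrix ℝ).det
      = (x+1) ^ (r-1+s*(t-1)) * (x - ((t:ℝ)-1)) ^ (s-1) *
        (x^2 - ((r:ℝ) + (t:ℝ) - 2)*x + (((r:ℝ)-1)*((t:ℝ)-1) - (r:ℝ)*(s:ℝ)*(t:ℝ))) := by
  rw [hM r s t x, Matrix.det_add_mul _ _ (detDm_unit r s t x ht hx1 hx2),
    hE r s t x ht hx1 hx2, detDm r s t x ht hx1, Matrix.det_fin_two_of]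
  have er : (x+1) ^ r = (x+1) ^ (r-1) * (x+1) := by
    conv_lhs => rw [← Nat.succ_pred_eq_of_pos hr, pow_succ]
    rfl
  have es : (x+1-(t:ℝ)) ^ s = (x+1-(t:ℝ)) ^ (s-1) * (x+1-(t:ℝ)) := by
    conv_lhs => rw [← Nat.succ_pred_eq_of_pos hs, pow_succ]
    rfl
  have emul : ((x+1) ^ (t-1) * (x+1-(t:ℝ))) ^ s = (x+1) ^ (s*(t-1)) * (x+1-(t:ℝ)) ^ s := by
    rw [mul_pow, ← pow_mul, mul_comm (t-1) s]
  have hb : x - ((t:ℝ)-1) = x + 1 - t := by ring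
  have key : (x+1) * (x+1-(t:ℝ)) *
      ((1 - r * (x+1)⁻¹) * 1 - -((r:ℝ) * (x+1)⁻¹) * -((s*t : ℝ) * (x+1-t)⁻¹))
      = x^2 - ((r:ℝ) + (t:ℝ) - 2)*x + (((r:ℝ)-1)*((t:ℝ)-1) - (r:ℝ)*(s:ℝ)*(t:ℝ)) := by
    field_simp
    ring
  rw [er, emul, es, pow_add, hb, ← key]
  ring

end MC


/-- The adjacency characteristic polynomial of the multicone graph `K_r ∇ sK_t` equals
`(x+1)^(r-1+s(t-1)) · (x-(t-1))^(s-1) · (x² - a x + b)` where `a = r+t-2` and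
`b = (r-1)(t-1) - rst`. -/
theorem multicone_adj_charpoly (r s t : ℕ) (hr : 1 ≤ r) (hs : 1 ≤ s) (ht : 1 ≤ t) :
    ((multicone r s t).adjMatrix ℝ).charpoly =
      (X + 1) ^ (r - 1 + s * (t - 1)) * (X - C ((t : ℝ) - 1)) ^ (s - 1) *
        (X ^ 2 - C ((r : ℝ) + (t : ℝ) - 2) * X +
          C (((r : ℝ) - 1) * ((t : ℝ) - 1) - (r : ℝ) * (s : ℝ) * (t : ℝ))) := by
  apply Polynomial.eq_of_infinite_eval_eq
  have hinf : (({-1, (t:ℝ)-1} : Set ℝ)ᶜ).Infinite :=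
    Set.Finite.infinite_compl ((Set.finite_singleton _).insert _)
  refine Set.Infinite.mono (fun x hx => ?_) hinf
  simp only [Set.mem_compl_iff, Set.mem_insert_iff, Set.mem_singleton_iff, not_or] at hx
  obtain ⟨h1, h2⟩ := hx
  have hx1 : x + 1 ≠ 0 := fun h => h1 (by linarith)
  have hx2 : x + 1 - (t:ℝ) ≠ 0 := fun h => h2 (by linarith)
  show eval x _ = eval x _
  have hcl : eval x ((multicone r s t).adjMatrix ℝ).charpoly
      = (x • (1 : Matrix (Fin r ⊕ Fin s × Fin t) (Fin r ⊕ Fin s × Fin t) ℝ)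
          - (multicone r s t).adjMatrix ℝ).det := by
    rw [Matrix.charpoly, ← Polynomial.coe_evalRingHom, RingHom.map_det]
    congr 1
    ext i j
    by_cases h : i = j
    · subst h
      simp [Matrix.charmatrix_apply_eq, Matrix.one_apply]
    · simp [Matrix.charmatrix_apply_ne _ _ _ h, Matrix.one_apply, h, apply_ite (eval x)]
  rw [hcl, MC.det_eval r s t x hr hs ht hx1 hx2]
  simp
end

section
/- Let s be a positive integer. If H is a finite simple graph whose Laplacian matrix has the same characteristic polynomial as that of the friendship graph F_s = K_1 ∇ sK_2 (the graph consisting of s triangles all sharing exactly one common vertex), then H is isomorphic to F_s; that is, every friendship graph is determined by its Laplacian spectrum. -/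
open SimpleGraph Polynomial

section Helpers
open Matrix Finset Polynomial SimpleGraph

section SpectralHelpers
variable {n : Type*} [Fintype n] [DecidableEq n]

lemma my_charpoly_diagonal (d : n → ℝ) :
    (Matrix.diagonal d).charpoly = ∏ i, ((X : ℝ[X]) - C (d i)) := by
  have h : charmatrix (Matrix.diagonal d)
      = Matrix.diagonal (fun i => (X : ℝ[X]) - C (d i)) := by
    ext i j
    by_cases h : i = j
    · subst h; simp
    · simp [h, Matrix.diagonal_apply_ne _ h]
  rw [Matrix.charpoly, h, Matrix.det_diagonal]

lemma my_charpoly_conj (U D : Matrix n n ℝ) (h1 : U * star U = 1) (h2 : star U * U = 1) :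
    (U * D * star U).charpoly = D.charpoly := by
  let f : Matrix n n ℝ →+* Matrix n n ℝ[X] := (C : ℝ →+* ℝ[X]).mapMatrix
  have hcm : charmatrix (U * D * star U) = f U * charmatrix D * f (star U) := by
    unfold charmatrix
    rw [Matrix.mul_sub, Matrix.sub_mul]
    congr 1
    · have hXc : ∀ M : Matrix n n ℝ[X], Matrix.scalar n (X : ℝ[X]) * M
          = M * Matrix.scalar n (X : ℝ[X]) := by
        intro M
        exact (Matrix.scalar_commute (X : ℝ[X]) (fun r => Commute.all _ r) M)
      calc Matrix.scalar n (X : ℝ[X]) = Matrix.scalar n (X : ℝ[X]) * (f U * f (star U)) := by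
            rw [← _root_.map_mul, h1, _root_.map_one, mul_one]
        _ = f U * Matrix.scalar n (X : ℝ[X]) * f (star U) := by
            rw [← mul_assoc, hXc (f U)]
    · simp [f, ← mul_assoc]
  have hdet1 : (f (star U)).det * (f U).det = 1 := by
    rw [← Matrix.det_mul, ← _root_.map_mul f, h2, _root_.map_one, Matrix.det_one]
  unfold Matrix.charpoly
  rw [hcm, Matrix.det_mul, Matrix.det_mul, mul_comm, ← mul_assoc, hdet1, one_mul]

lemma my_hermitian_charpoly {A : Matrix n n ℝ} (hA : A.IsHermitian) :
    A.charpoly = ∏ i, ((X : ℝ[X]) - C (hA.eigenvalues i)) := by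
  conv_lhs => rw [hA.spectral_theorem]
  have h1 : (hA.eigenvectorUnitary : Matrix n n ℝ) * star (hA.eigenvectorUnitary : Matrix n n ℝ) = 1 :=
    Matrix.mem_unitaryGroup_iff.mp (hA.eigenvectorUnitary).2
  have h2 : star (hA.eigenvectorUnitary : Matrix n n ℝ) * (hA.eigenvectorUnitary : Matrix n n ℝ) = 1 :=
    Matrix.mem_unitaryGroup_iff'.mp (hA.eigenvectorUnitary).2
  rw [Unitary.conjStarAlgAut_apply]
  rw [my_charpoly_conj _ _ h1 h2]
  have : (RCLike.ofReal ∘ hA.eigenvalues : n → ℝ) = hA.eigenvalues := by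
    ext i; simp
  rw [this, my_charpoly_diagonal]

lemma my_hermitian_trace_sq {A : Matrix n n ℝ} (hA : A.IsHermitian) :
    (A * A).trace = ∑ i, hA.eigenvalues i ^ 2 := by
  have h2 : star (hA.eigenvectorUnitary : Matrix n n ℝ) * (hA.eigenvectorUnitary : Matrix n n ℝ) = 1 :=
    Matrix.mem_unitaryGroup_iff'.mp (hA.eigenvectorUnitary).2
  set U := (hA.eigenvectorUnitary : Matrix n n ℝ)
  set D := Matrix.diagonal (RCLike.ofReal ∘ hA.eigenvalues : n → ℝ)
  have hD : (RCLike.ofReal ∘ hA.eigenvalues : n → ℝ) = hA.eigenvalues := by ext i; simp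
  have hAs : A = U * D * star U := hA.spectral_theorem
  have : A * A = U * (D * D) * star U := by
    rw [hAs]
    calc U * D * star U * (U * D * star U) = U * (D * ((star U * U) * D)) * star U := by
          noncomm_ring
      _ = U * (D * D) * star U := by rw [h2, one_mul]
  rw [this, Matrix.trace_mul_cycle, ← mul_assoc, h2, one_mul]
  simp [D, hD, Matrix.diagonal_mul_diagonal, Matrix.trace_diagonal, pow_two]

end SpectralHelpers

section SpectralHelpers2
variable {n : Type*} [Fintype n] [DecidableEq n] {m : Type*} [Fintype m] [DecidableEq m]

omit [DecidableEq n] in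
lemma my_roots_prod (f : n → ℝ) :
    (∏ i, ((X : ℝ[X]) - C (f i))).roots = Finset.univ.val.map f := by
  have : (∏ i, ((X : ℝ[X]) - C (f i)))
      = ((Finset.univ.val.map f).map (fun a => (X : ℝ[X]) - C a)).prod := by
    rw [Multiset.map_map]
    rfl
  rw [this, Polynomial.roots_multiset_prod_X_sub_C]

lemma my_eig_multiset_eq {A : Matrix n n ℝ} {B : Matrix m m ℝ}
    (hA : A.IsHermitian) (hB : B.IsHermitian) (h : A.charpoly = B.charpoly) :
    Finset.univ.val.map hA.eigenvalues = Finset.univ.val.map hB.eigenvalues := by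
  have h2 := congrArg Polynomial.roots h
  rwa [my_hermitian_charpoly hA, my_hermitian_charpoly hB, my_roots_prod, my_roots_prod] at h2

lemma my_trace_sq_eq {A : Matrix n n ℝ} {B : Matrix m m ℝ}
    (hA : A.IsHermitian) (hB : B.IsHermitian) (h : A.charpoly = B.charpoly) :
    (A * A).trace = (B * B).trace := by
  rw [my_hermitian_trace_sq hA, my_hermitian_trace_sq hB]
  have hm := my_eig_multiset_eq hA hB h
  have e1 : ∑ i, hA.eigenvalues i ^ 2 = ((Finset.univ.val.map hA.eigenvalues).map (· ^ 2)).sum := by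
    rw [Multiset.map_map]; rfl
  have e2 : ∑ i, hB.eigenvalues i ^ 2 = ((Finset.univ.val.map hB.eigenvalues).map (· ^ 2)).sum := by
    rw [Multiset.map_map]; rfl
  rw [e1, e2, hm]

lemma my_charpoly_eval (M : Matrix n n ℝ) (t : ℝ) :
    M.charpoly.eval t = (Matrix.diagonal (fun _ => t) - M).det := by
  rw [Matrix.charpoly, ← Polynomial.coe_evalRingHom, RingHom.map_det]
  congr 1
  ext i j
  by_cases h : i = j
  · subst h; simp
  · simp [h, Matrix.charmatrix_apply_ne _ _ _ h, Matrix.diagonal_apply_ne _ h]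

end SpectralHelpers2


section GraphHelpers
variable {V : Type*} [Fintype V] [DecidableEq V] (G : SimpleGraph V) [DecidableRel G.Adj]

lemma my_lapMatrix_apply (u w : V) :
    G.lapMatrix ℝ u w = (if u = w then (G.degree u : ℝ) else 0) - (if G.Adj u w then 1 else 0) := by
  simp only [lapMatrix, Matrix.sub_apply, degMatrix, Matrix.diagonal_apply, adjMatrix_apply]

lemma my_trace_lapMatrix : (G.lapMatrix ℝ).trace = ∑ v, (G.degree v : ℝ) := by
  rw [Matrix.trace]
  congr 1
  ext v
  simp [Matrix.diag, my_lapMatrix_apply, G.irrefl]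

lemma my_trace_lapMatrix_sq :
    (G.lapMatrix ℝ * G.lapMatrix ℝ).trace = ∑ v, ((G.degree v : ℝ) ^ 2 + G.degree v) := by
  rw [Matrix.trace]
  congr 1
  ext u
  rw [Matrix.diag_apply, Matrix.mul_apply]
  have hrow : ∀ w, G.lapMatrix ℝ u w * G.lapMatrix ℝ w u
      = (if w = u then (G.degree u : ℝ)^2 else 0) + (if G.Adj u w then 1 else 0) := by
    intro w
    by_cases h : w = u
    · subst h; simp [my_lapMatrix_apply, G.irrefl, pow_two]
    · have h' : ¬ u = w := fun hh => h hh.symm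
      have hadj : G.Adj w u ↔ G.Adj u w := adj_comm G w u
      simp only [my_lapMatrix_apply, if_neg h, if_neg h', zero_sub, neg_mul_neg]
      by_cases ha : G.Adj u w
      · simp [ha, hadj.mpr ha]
      · simp [ha, fun hh => ha (hadj.mp hh)]
  rw [Finset.sum_congr rfl (fun w _ => hrow w), Finset.sum_add_distrib]
  congr 1
  · simp
  · rw [← degree_eq_sum_if_adj]

lemma my_lapMatrix_col_sum (t : V) : ∑ u, G.lapMatrix ℝ u t = 0 := by
  simp only [my_lapMatrix_apply, Finset.sum_sub_distrib]
  rw [Finset.sum_ite_eq' Finset.univ t (fun u => (G.degree u : ℝ))]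
  simp only [Finset.mem_univ, if_true]
  have : ∀ u, (if G.Adj u t then (1:ℝ) else 0) = (if G.Adj t u then (1:ℝ) else 0) := by
    intro u
    by_cases h : G.Adj u t
    · rw [if_pos h, if_pos (G.adj_symm h)]
    · rw [if_neg h, if_neg (fun hh => h (G.adj_symm hh))]
  rw [Finset.sum_congr rfl (fun u _ => this u), ← degree_eq_sum_if_adj, sub_self]

end GraphHelpers

section Multicone
variable {s : ℕ}

lemma mc_adj_inl (s : ℕ) (w : Fin 1 ⊕ Fin s × Fin 2) :
    (multicone 1 s 2).Adj (Sum.inl 0) w ↔ w ≠ Sum.inl 0 := by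
  unfold multicone
  constructor
  · rintro ⟨h, -⟩
    exact fun hw => h hw.symm
  · intro hw
    refine ⟨fun h => hw h.symm, ?_⟩
    rintro i a j b h -
    exact absurd h (by simp)

lemma mc_adj_inr_inl (s : ℕ) (p : Fin s × Fin 2) (c : Fin 1) :
    (multicone 1 s 2).Adj (Sum.inr p) (Sum.inl c) := by
  unfold multicone
  refine ⟨by simp, ?_⟩
  rintro i a j b - h
  exact absurd h (by simp)

lemma mc_adj_inr_inr (s : ℕ) (p q : Fin s × Fin 2) :
    (multicone 1 s 2).Adj (Sum.inr p) (Sum.inr q) ↔ p.1 = q.1 ∧ p ≠ q := by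
  unfold multicone
  constructor
  · rintro ⟨hne, h⟩
    refine ⟨h p.1 p.2 q.1 q.2 (by simp) (by simp), fun hpq => hne (by rw [hpq])⟩
  · rintro ⟨h1, hne⟩
    refine ⟨by simpa using hne, ?_⟩
    rintro i a j b hv hw
    rw [Sum.inr.injEq] at hv hw
    rw [hv, hw] at h1
    exact h1

/-- the other element of `Fin 2` -/
def oth (a : Fin 2) : Fin 2 := if a = 0 then 1 else 0

lemma oth_ne (a b : Fin 2) : a ≠ b ↔ b = oth a := by
  revert a b; decide

lemma oth_ne_self (a : Fin 2) : a ≠ oth a := by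
  revert a; decide

lemma mc_nbr_inl (s : ℕ) :
    (multicone 1 s 2).neighborFinset (Sum.inl 0) = Finset.univ.erase (Sum.inl 0) := by
  ext w
  simp [mem_neighborFinset, mc_adj_inl]

lemma mc_nbr_inr (s : ℕ) (p : Fin s × Fin 2) :
    (multicone 1 s 2).neighborFinset (Sum.inr p) = {Sum.inl 0, Sum.inr (p.1, oth p.2)} := by
  ext w
  rw [mem_neighborFinset]
  cases w with
  | inl c =>
    have hc : c = 0 := Subsingleton.elim _ _
    subst hc
    simp [mc_adj_inr_inl]
  | inr q =>
    rw [mc_adj_inr_inr]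
    simp only [Finset.mem_insert, Finset.mem_singleton, Sum.inr.injEq]
    constructor
    · rintro ⟨h1, hne⟩
      right
      have hp2 : p.2 ≠ q.2 := fun h2 => hne (Prod.ext h1 h2)
      rw [oth_ne] at hp2
      exact Prod.ext h1.symm hp2
    · rintro (h | h)
      · exact absurd h (by simp)
      · subst h
        exact ⟨rfl, fun hq => oth_ne_self p.2 (congrArg Prod.snd hq)⟩

lemma mc_card (s : ℕ) : Fintype.card (Fin 1 ⊕ Fin s × Fin 2) = 2 * s + 1 := by
  simp [Fintype.card_sum, Fintype.card_prod]
  ring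

lemma mc_degree_inl (s : ℕ) : (multicone 1 s 2).degree (Sum.inl 0) = 2 * s := by
  rw [← card_neighborFinset_eq_degree, mc_nbr_inl, Finset.card_erase_of_mem (Finset.mem_univ _),
    Finset.card_univ, mc_card]
  omega

lemma mc_degree_inr (s : ℕ) (p : Fin s × Fin 2) :
    (multicone 1 s 2).degree (Sum.inr p) = 2 := by
  rw [← card_neighborFinset_eq_degree, mc_nbr_inr]
  rw [Finset.card_pair (by simp)]

lemma mc_sum_degree (s : ℕ) : ∑ v, (multicone 1 s 2).degree v = 6 * s := by
  rw [Fintype.sum_sum_type]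
  have h1 : ∑ c : Fin 1, (multicone 1 s 2).degree (Sum.inl c) = 2 * s := by
    rw [Fin.sum_univ_one, mc_degree_inl]
  have h2 : ∑ p : Fin s × Fin 2, (multicone 1 s 2).degree (Sum.inr p) = 4 * s := by
    rw [Finset.sum_congr rfl (fun p _ => mc_degree_inr s p), Finset.sum_const, Finset.card_univ,
      Fintype.card_prod, Fintype.card_fin, Fintype.card_fin, smul_eq_mul]
    ring
  rw [h1, h2]; ring

lemma mc_sum_degree_sq (s : ℕ) :
    ∑ v, ((multicone 1 s 2).degree v) ^ 2 = 4 * s ^ 2 + 8 * s := by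
  rw [Fintype.sum_sum_type]
  have h1 : ∑ c : Fin 1, ((multicone 1 s 2).degree (Sum.inl c)) ^ 2 = 4 * s ^ 2 := by
    rw [Fin.sum_univ_one, mc_degree_inl]; ring
  have h2 : ∑ p : Fin s × Fin 2, ((multicone 1 s 2).degree (Sum.inr p)) ^ 2 = 8 * s := by
    have : ∀ p : Fin s × Fin 2, ((multicone 1 s 2).degree (Sum.inr p)) ^ 2 = 4 := by
      intro p; rw [mc_degree_inr]; ring
    rw [Finset.sum_congr rfl (fun p _ => this p), Finset.sum_const, Finset.card_univ,
      Fintype.card_prod, Fintype.card_fin, Fintype.card_fin, smul_eq_mul]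
    ring
  rw [h1, h2]

/-- eigenvector of the multicone Laplacian for eigenvalue `2s+1` -/
def mcEig (s : ℕ) : Fin 1 ⊕ Fin s × Fin 2 → ℝ := Sum.elim (fun _ => (2 * s : ℝ)) (fun _ => -1)

lemma mc_sum_eig (s : ℕ) : ∑ v, mcEig s v = 0 := by
  rw [Fintype.sum_sum_type]
  simp [mcEig, Finset.sum_const, Fintype.card_prod]
  ring

lemma mc_eig (s : ℕ) :
    (multicone 1 s 2).lapMatrix ℝ *ᵥ mcEig s = fun v => (2 * s + 1 : ℝ) * mcEig s v := by
  ext u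
  rw [SimpleGraph.lapMatrix_mulVec_apply]
  cases u with
  | inl c =>
    have hc : c = 0 := Subsingleton.elim _ _
    subst hc
    rw [mc_degree_inl, mc_nbr_inl, Finset.sum_erase_eq_sub (Finset.mem_univ _), mc_sum_eig]
    simp only [mcEig, Sum.elim_inl]
    push_cast
    ring
  | inr p =>
    rw [mc_degree_inr, mc_nbr_inr, Finset.sum_pair (by simp)]
    simp only [mcEig, Sum.elim_inl, Sum.elim_inr]
    push_cast
    ring

lemma mc_eig_ne_zero (s : ℕ) (hs : 1 ≤ s) : mcEig s ≠ 0 := by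
  intro h
  have := congrFun h (Sum.inl 0)
  simp only [mcEig, Sum.elim_inl, Pi.zero_apply] at this
  have : (s : ℝ) = 0 := by linarith
  exact_mod_cast absurd this (by exact_mod_cast Nat.one_le_iff_ne_zero.mp hs)

end Multicone


section Apex

theorem iso_of_apex {V : Type} [Fintype V] [DecidableEq V] (s : ℕ) (H : SimpleGraph V)
    [DecidableRel H.Adj] (hcard : Fintype.card V = 2 * s + 1)
    (z : V) (hz : ∀ y, y ≠ z → H.Adj z y)
    (huniq : ∀ u, u ≠ z → ∃! t, t ≠ z ∧ H.Adj u t) :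
    Nonempty (H ≃g multicone 1 s 2) := by
  classical
  -- the set of non-apex vertices
  have hcardT : Fintype.card {x : V // x ≠ z} = 2 * s := by
    have h1 : Fintype.card {x : V // x = z} = 1 := Fintype.card_subtype_eq z
    have h2 := Fintype.card_subtype_compl (p := fun x : V => x = z)
    simp only [h1, hcard] at h2
    rw [h2]
    omega
  -- unique-neighbor function
  have hex : ∀ u : {x : V // x ≠ z}, ∃ t : {x : V // x ≠ z},
      H.Adj u.1 t.1 ∧ ∀ t' : {x : V // x ≠ z}, H.Adj u.1 t'.1 → t' = t := by
    intro u
    obtain ⟨t, ⟨htz, hta⟩, hun⟩ := huniq u.1 u.2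
    exact ⟨⟨t, htz⟩, hta, fun t' ht' => Subtype.ext (hun t'.1 ⟨t'.2, ht'⟩)⟩
  choose f hadj hunq using hex
  have hfne : ∀ u, f u ≠ u := fun u h => H.irrefl (h ▸ hadj u)
  have hff : ∀ u, f (f u) = u := fun u => (hunq (f u) u (H.adj_symm (hadj u))).symm
  have hchar : ∀ u t, H.Adj u.1 t.1 ↔ t = f u := by
    intro u t
    exact ⟨hunq u t, fun h => h ▸ hadj u⟩
  -- setoid of matched pairs
  let st : Setoid {x : V // x ≠ z} :=
    ⟨fun x y => x = y ∨ H.Adj x.1 y.1, by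
      constructor
      · intro x; exact Or.inl rfl
      · intro x y h
        rcases h with h | h
        · exact Or.inl h.symm
        · exact Or.inr (H.adj_symm h)
      · intro x y w hxy hyw
        rcases hxy with h | h
        · rw [h]; exact hyw
        · rcases hyw with h2 | h2
          · rw [← h2]; exact Or.inr h
          · -- x and w are both neighbors of y
            have h1 : x = f y := hunq y x (H.adj_symm h)
            have h3 : w = f y := hunq y w h2
            exact Or.inl (h1.trans h3.symm)⟩
  letI : DecidableRel st.r := fun a b => Classical.dec _
  letI : DecidableEq (Quotient st) := fun a b => Classical.dec _
  -- fibers of the quotient map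
  have keyfib : ∀ q : Quotient st,
      Finset.univ.filter (fun y => Quotient.mk st y = q) = {q.out, f q.out} := by
    intro q
    ext y
    simp only [Finset.mem_filter, Finset.mem_univ, true_and, Finset.mem_insert,
      Finset.mem_singleton]
    have : Quotient.mk st y = q ↔ st.r y q.out := by
      conv_lhs => rw [← Quotient.out_eq q]
      exact ⟨Quotient.exact, fun h => Quotient.sound h⟩
    rw [this]
    constructor
    · rintro (h | h)
      · exact Or.inl h
      · exact Or.inr (hunq q.out y (H.adj_symm h))
    · rintro (h | h)
      · exact Or.inl h
      · exact Or.inr (h ▸ H.adj_symm (hadj q.out))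
  have hfibcard : ∀ q : Quotient st,
      (Finset.univ.filter (fun y => Quotient.mk st y = q)).card = 2 := by
    intro q
    rw [keyfib q, Finset.card_pair (Ne.symm (hfne q.out))]
  -- cardinality of the quotient
  have hcardQ : Fintype.card (Quotient st) = s := by
    have h1 : (Finset.univ : Finset {x : V // x ≠ z}).card
        = ∑ q : Quotient st, (Finset.univ.filter (fun y => Quotient.mk st y = q)).card :=
      Finset.card_eq_sum_card_fiberwise (fun x _ => Finset.mem_univ _)
    rw [Finset.card_univ, hcardT] at h1
    rw [Finset.sum_congr rfl (fun q _ => hfibcard q), Finset.sum_const, Finset.card_univ,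
      smul_eq_mul, mul_comm] at h1
    omega
  obtain ⟨gQ⟩ : Nonempty (Quotient st ≃ Fin s) := by
    rw [← Fintype.card_eq]
    simp [hcardQ]
  -- the bijection from non-apex vertices to `Fin s × Fin 2`
  set h : {x : V // x ≠ z} → Fin s × Fin 2 :=
    fun x => (gQ (Quotient.mk st x), if x = (Quotient.mk st x).out then 0 else 1) with hh
  have hsame : ∀ x y, Quotient.mk st x = Quotient.mk st y ↔ (x = y ∨ H.Adj x.1 y.1) :=
    fun x y => ⟨Quotient.exact, fun h => Quotient.sound h⟩
  have hinj : Function.Injective h := by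
    intro x y hxy
    rw [hh, Prod.mk.injEq] at hxy
    obtain ⟨h1, h2⟩ := hxy
    have hq : Quotient.mk st x = Quotient.mk st y := gQ.injective h1
    rw [hq] at h2
    set q := Quotient.mk st y with hqdef
    -- x and y both lie in {q.out, f q.out}
    have hx2 : x = q.out ∨ x = f q.out := by
      have : x ∈ Finset.univ.filter (fun y => Quotient.mk st y = q) :=
        Finset.mem_filter.mpr ⟨Finset.mem_univ _, hq⟩
      rw [keyfib q] at this
      simpa using this
    have hy2 : y = q.out ∨ y = f q.out := by
      have : y ∈ Finset.univ.filter (fun y' => Quotient.mk st y' = q) :=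
        Finset.mem_filter.mpr ⟨Finset.mem_univ _, hqdef.symm⟩
      rw [keyfib q] at this
      simpa using this
    rcases hx2 with hx | hx <;> rcases hy2 with hy | hy
    · rw [hx, hy]
    · rw [if_pos hx] at h2
      rw [if_neg (by rw [hy]; exact fun hc => hfne q.out hc)] at h2
      exact absurd h2 (by decide)
    · rw [if_neg (by rw [hx]; exact fun hc => hfne q.out hc)] at h2
      rw [if_pos hy] at h2
      exact absurd h2 (by decide)
    · rw [hx, hy]
  have hbij : Function.Bijective h := by
    rw [Fintype.bijective_iff_injective_and_card]
    refine ⟨hinj, ?_⟩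
    rw [hcardT]
    simp [Fintype.card_prod]
    ring
  let eT : {x : V // x ≠ z} ≃ Fin s × Fin 2 := Equiv.ofBijective h hbij
  let e1 : {x : V // x = z} ≃ Fin 1 :=
    ⟨fun _ => 0, fun _ => ⟨z, rfl⟩, by rintro ⟨x, rfl⟩; rfl, fun i => Subsingleton.elim _ _⟩
  let e : V ≃ (Fin 1 ⊕ Fin s × Fin 2) :=
    ((Equiv.sumCompl (fun x => x = z)).symm).trans (Equiv.sumCongr e1 eT)
  have hez : e z = Sum.inl 0 := by
    simp only [e, Equiv.trans_apply, Equiv.sumCompl_symm_apply_of_pos (p := fun x => x = z) (a := z) rfl]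
    rfl
  have hex' : ∀ (x : V) (hx : x ≠ z), e x = Sum.inr (eT ⟨x, hx⟩) := by
    intro x hx
    simp only [e, Equiv.trans_apply, Equiv.sumCompl_symm_apply_of_neg (p := fun x => x = z) (a := x) hx]
    rfl
  -- adjacency transfer
  refine ⟨⟨e, ?_⟩⟩
  intro a b
  by_cases ha : a = z <;> by_cases hb : b = z
  · subst ha; subst hb
    rw [hez]
    simp [SimpleGraph.irrefl]
  · subst ha
    rw [hez, hex' b hb]
    constructor
    · intro _; exact hz b hb
    · intro _; exact mc_adj_inl s _ |>.mpr (by simp)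
  · subst hb
    rw [hez, hex' a ha]
    constructor
    · intro _; exact H.adj_symm (hz a ha)
    · intro _; exact mc_adj_inr_inl s _ _
  · rw [hex' a ha, hex' b hb, mc_adj_inr_inr]
    have hfst : (eT ⟨a, ha⟩).1 = (eT ⟨b, hb⟩).1 ↔
        Quotient.mk st ⟨a, ha⟩ = Quotient.mk st ⟨b, hb⟩ := by
      constructor
      · intro hq; exact gQ.injective hq
      · intro hq; simp only [eT, Equiv.ofBijective_apply, hh, hq]
    have hsnd : eT ⟨a, ha⟩ ≠ eT ⟨b, hb⟩ ↔ (⟨a, ha⟩ : {x : V // x ≠ z}) ≠ ⟨b, hb⟩ := by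
      constructor
      · intro hne hc; exact hne (by rw [hc])
      · intro hne hc; exact hne (hinj hc)
    constructor
    · rintro ⟨h1, h2⟩
      have := (hsame _ _).mp ((hfst).mp h1)
      rcases this with hcc | hcc
      · exact absurd hcc (hsnd.mp h2)
      · exact hcc
    · intro hadj'
      refine ⟨hfst.mpr ((hsame _ _).mpr (Or.inr hadj')), hsnd.mpr ?_⟩
      intro hc
      have : a = b := congrArg Subtype.val hc
      exact H.irrefl (this ▸ hadj')

end Apex


section Counting
variable {V : Type} [Fintype V] [DecidableEq V]

/-- From the degree sums, each non-apex vertex has a unique non-apex neighbor. -/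
theorem apex_unique_nbr (s : ℕ) (H : SimpleGraph V) [DecidableRel H.Adj]
    (hcard : Fintype.card V = 2 * s + 1)
    (hd1 : ∑ v, H.degree v = 6 * s)
    (hd2 : ∑ v, (H.degree v) ^ 2 = 4 * s ^ 2 + 8 * s)
    (z : V) (hz : ∀ y, y ≠ z → H.Adj z y) :
    ∀ u, u ≠ z → ∃! t, t ≠ z ∧ H.Adj u t := by
  classical
  set T : Finset V := Finset.univ.erase z with hT
  have hcardT : T.card = 2 * s := by
    rw [hT, Finset.card_erase_of_mem (Finset.mem_univ _), Finset.card_univ, hcard]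
    omega
  have hnbrz : H.neighborFinset z = T := by
    ext y
    rw [mem_neighborFinset, hT, Finset.mem_erase]
    constructor
    · intro h; exact ⟨(H.ne_of_adj h).symm, Finset.mem_univ _⟩
    · rintro ⟨h, -⟩; exact hz y h
  have hdegz : H.degree z = 2 * s := by
    rw [← card_neighborFinset_eq_degree, hnbrz, hcardT]
  have hmemz : ∀ u ∈ T, z ∈ H.neighborFinset u := by
    intro u hu
    rw [mem_neighborFinset]
    exact H.adj_symm (hz u (Finset.mem_erase.mp hu).1)
  let d' : V → ℕ := fun u => ((H.neighborFinset u).erase z).card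
  have hdu : ∀ u ∈ T, H.degree u = d' u + 1 := by
    intro u hu
    rw [← card_neighborFinset_eq_degree]
    show (H.neighborFinset u).card = ((H.neighborFinset u).erase z).card + 1
    rw [Finset.card_erase_of_mem (hmemz u hu)]
    have : 0 < (H.neighborFinset u).card := Finset.card_pos.mpr ⟨z, hmemz u hu⟩
    omega
  -- sums over T
  have hsplit1 : H.degree z + ∑ u ∈ T, H.degree u = 6 * s := by
    rw [hT, Finset.add_sum_erase Finset.univ (fun v => H.degree v) (Finset.mem_univ z), hd1]
  have hsum1 : ∑ u ∈ T, H.degree u = 4 * s := by omega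
  have hsplit2 : (H.degree z) ^ 2 + ∑ u ∈ T, (H.degree u) ^ 2 = 4 * s ^ 2 + 8 * s := by
    rw [hT, Finset.add_sum_erase Finset.univ (fun v => (H.degree v) ^ 2) (Finset.mem_univ z), hd2]
  have hdegz2 : (H.degree z) ^ 2 = 4 * s ^ 2 := by rw [hdegz]; ring
  have hsum2 : ∑ u ∈ T, (H.degree u) ^ 2 = 8 * s := by omega
  -- rewrite in terms of d'
  have hs1 : ∑ u ∈ T, (d' u + 1) = 4 * s := by
    rw [← Finset.sum_congr rfl hdu]; exact hsum1
  have hsd : ∑ u ∈ T, d' u = 2 * s := by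
    rw [Finset.sum_add_distrib, Finset.sum_const, smul_eq_mul, mul_one, hcardT] at hs1
    omega
  have hs2 : ∑ u ∈ T, (d' u + 1) ^ 2 = 8 * s := by
    rw [← hsum2]
    exact Finset.sum_congr rfl (fun u hu => by rw [← hdu u hu])
  have hsd2 : ∑ u ∈ T, (d' u) ^ 2 = 2 * s := by
    have hexp : ∀ u ∈ T, (d' u + 1) ^ 2 = (d' u) ^ 2 + 2 * d' u + 1 := fun u _ => by ring
    rw [Finset.sum_congr rfl hexp, Finset.sum_add_distrib, Finset.sum_add_distrib,
      Finset.sum_const, smul_eq_mul, mul_one, hcardT, ← Finset.mul_sum, hsd] at hs2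
    omega
  -- each d' u = 1
  have hle : ∀ u ∈ T, d' u ≤ (d' u) ^ 2 := fun u _ => Nat.le_self_pow two_ne_zero _
  have hsq : ∀ u ∈ T, (d' u) ^ 2 = d' u := by
    have := (Finset.sum_eq_sum_iff_of_le hle).mp (by rw [hsd, hsd2])
    intro u hu
    exact ((this u hu).symm)
  have hone : ∀ u ∈ T, d' u = 1 := by
    have hle1 : ∀ u ∈ T, d' u ≤ 1 := by
      intro u hu
      have h := hsq u hu
      by_contra hgt
      push_neg at hgt
      have h2 : 2 * d' u ≤ d' u * d' u := Nat.mul_le_mul_right _ hgt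
      rw [pow_two] at h
      omega
    have heq : ∑ u ∈ T, d' u = ∑ u ∈ T, 1 := by
      rw [hsd, Finset.sum_const, smul_eq_mul, mul_one, hcardT]
    have := (Finset.sum_eq_sum_iff_of_le hle1).mp heq
    intro u hu
    exact this u hu
  -- conclude
  intro u hu
  have huT : u ∈ T := by rw [hT, Finset.mem_erase]; exact ⟨hu, Finset.mem_univ _⟩
  obtain ⟨t, ht⟩ := Finset.card_eq_one.mp (hone u huT)
  have hmem : ∀ y, y ∈ (H.neighborFinset u).erase z ↔ (y ≠ z ∧ H.Adj u y) := by
    intro y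
    rw [Finset.mem_erase, mem_neighborFinset]
  refine ⟨t, ?_, ?_⟩
  · have : t ∈ (H.neighborFinset u).erase z := by rw [ht]; exact Finset.mem_singleton_self t
    exact (hmem t).mp this
  · intro y hy
    have : y ∈ (H.neighborFinset u).erase z := (hmem y).mpr hy
    rw [ht, Finset.mem_singleton] at this
    exact this
end Counting


section Join
variable {V : Type} [Fintype V] [DecidableEq V]

/-- From a join decomposition and the degree sums, one side of the join is a single
universal vertex. -/
theorem exists_apex_vertex (s : ℕ) (hs : 1 ≤ s) (H : SimpleGraph V) [DecidableRel H.Adj]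
    (hcard : Fintype.card V = 2 * s + 1)
    (hd1 : ∑ v, H.degree v = 6 * s)
    (hd2 : ∑ v, (H.degree v) ^ 2 = 4 * s ^ 2 + 8 * s)
    (S : Finset V) (hS1 : S.Nonempty) (hS2 : Sᶜ.Nonempty)
    (hjoin : ∀ x ∈ S, ∀ y ∈ Sᶜ, H.Adj x y) :
    ∃ z : V, ∀ y, y ≠ z → H.Adj z y := by
  classical
  set a := S.card with ha
  set b := Sᶜ.card with hb
  clear_value a b
  have hab : a + b = 2 * s + 1 := by
    rw [ha, hb, Finset.card_add_card_compl, hcard]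
  have ha1 : 1 ≤ a := by rw [ha]; exact Finset.card_pos.mpr hS1
  have hb1 : 1 ≤ b := by rw [hb]; exact Finset.card_pos.mpr hS2
  -- degree lower bounds
  have hdegS : ∀ x ∈ S, b ≤ H.degree x := by
    intro x hx
    rw [← card_neighborFinset_eq_degree, hb]
    apply Finset.card_le_card
    intro y hy
    rw [mem_neighborFinset]
    exact hjoin x hx y hy
  have hdegSc : ∀ y ∈ Sᶜ, a ≤ H.degree y := by
    intro y hy
    rw [← card_neighborFinset_eq_degree, ha]
    apply Finset.card_le_card
    intro x hx
    rw [mem_neighborFinset]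
    exact H.adj_symm (hjoin x hx y hy)
  have hsplit : ∑ x ∈ S, H.degree x + ∑ y ∈ Sᶜ, H.degree y = 6 * s := by
    rw [Finset.sum_add_sum_compl, hd1]
  have hlb1 : a * b ≤ ∑ x ∈ S, H.degree x := by
    calc a * b = ∑ _x ∈ S, b := by rw [Finset.sum_const, smul_eq_mul, ← ha]
    _ ≤ ∑ x ∈ S, H.degree x := Finset.sum_le_sum hdegS
  have hlb2 : b * a ≤ ∑ y ∈ Sᶜ, H.degree y := by
    calc b * a = ∑ _y ∈ Sᶜ, a := by rw [Finset.sum_const, smul_eq_mul, ← hb]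
    _ ≤ ∑ y ∈ Sᶜ, H.degree y := Finset.sum_le_sum hdegSc
  rw [mul_comm] at hlb2
  by_cases hA : a = 1
  · -- S = {z}
    obtain ⟨z, hzS⟩ := Finset.card_eq_one.mp (by rw [← ha]; exact hA)
    refine ⟨z, fun y hy => ?_⟩
    have hyS : y ∈ Sᶜ := by
      rw [Finset.mem_compl, hzS, Finset.mem_singleton]
      exact hy
    exact hjoin z (by rw [hzS]; exact Finset.mem_singleton_self z) y hyS
  by_cases hB : b = 1
  · obtain ⟨z, hzS⟩ := Finset.card_eq_one.mp (by rw [← hb]; exact hB)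
    refine ⟨z, fun y hy => ?_⟩
    have hyS : y ∈ S := by
      by_contra hc
      have : y ∈ Sᶜ := Finset.mem_compl.mpr hc
      rw [hzS, Finset.mem_singleton] at this
      exact hy this
    have hzc : z ∈ Sᶜ := by rw [hzS]; exact Finset.mem_singleton_self z
    exact H.adj_symm (hjoin y hyS z hzc)
  -- both sides have ≥ 2 vertices: contradiction
  exfalso
  have ha2 : 2 ≤ a := by omega
  have hb2 : 2 ≤ b := by omega
  -- ab ≥ 2(a+b) - 4
  have hab4 : 2 * (a + b) ≤ a * b + 4 := by
    obtain ⟨a', rfl⟩ := Nat.exists_eq_add_of_le ha2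
    obtain ⟨b', rfl⟩ := Nat.exists_eq_add_of_le hb2
    nlinarith
  have h2ab : 2 * (a * b) ≤ 6 * s := by
    calc 2 * (a * b) = a * b + a * b := by ring
    _ ≤ ∑ x ∈ S, H.degree x + ∑ y ∈ Sᶜ, H.degree y := Nat.add_le_add hlb1 hlb2
    _ = 6 * s := hsplit
  -- hence s ≤ 2, so s = 2
  have hs2 : s = 2 := by omega
  subst hs2
  -- then ab = 6 and the degree sums are tight
  have hab6 : a * b = 6 := by omega
  have ht1 : ∑ x ∈ S, H.degree x = a * b := by omega
  have ht2 : ∑ y ∈ Sᶜ, H.degree y = a * b := by omega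
  have hdS : ∀ x ∈ S, H.degree x = b := by
    have := (Finset.sum_eq_sum_iff_of_le hdegS).mp
      (by rw [ht1, Finset.sum_const, smul_eq_mul, ← ha])
    intro x hx
    exact ((this x hx).symm)
  have hdSc : ∀ y ∈ Sᶜ, H.degree y = a := by
    have := (Finset.sum_eq_sum_iff_of_le hdegSc).mp
      (by rw [ht2, Finset.sum_const, smul_eq_mul, ← hb, mul_comm])
    intro y hy
    exact ((this y hy).symm)
  -- sum of squares is 30, but should be 32
  have hsq : ∑ v, (H.degree v) ^ 2 = 30 := by
    have e1 : ∑ x ∈ S, (H.degree x) ^ 2 = ∑ _x ∈ S, b ^ 2 :=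
      Finset.sum_congr rfl (fun x hx => by rw [hdS x hx])
    have e2 : ∑ y ∈ Sᶜ, (H.degree y) ^ 2 = ∑ _y ∈ Sᶜ, a ^ 2 :=
      Finset.sum_congr rfl (fun y hy => by rw [hdSc y hy])
    rw [← Finset.sum_add_sum_compl S, e1, e2, Finset.sum_const, Finset.sum_const,
      smul_eq_mul, smul_eq_mul, ← ha, ← hb]
    have : a * b ^ 2 + b * a ^ 2 = (a * b) * (a + b) := by ring
    rw [this, hab6, hab]
  rw [hd2] at hsq
  norm_num at hsq
end Join

end Helpers

open Matrix Finset in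
/-- The friendship graph `F_s = K_1 ∇ sK_2` is determined by its Laplacian spectrum:
any graph L-cospectral with `F_s` is isomorphic to it. -/
theorem lap_cospectral_friendship_iso {V : Type} [Fintype V] [DecidableEq V]
    (s : ℕ) (hs : 1 ≤ s)
    (H : SimpleGraph V) [DecidableRel H.Adj]
    (hspec : (H.lapMatrix ℝ).charpoly = ((multicone 1 s 2).lapMatrix ℝ).charpoly) :
    Nonempty (H ≃g multicone 1 s 2) := by
  classical
  -- the number of vertices
  have hcard : Fintype.card V = 2 * s + 1 := by
    have h1 := congrArg Polynomial.natDegree hspec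
    rw [Matrix.charpoly_natDegree_eq_dim, Matrix.charpoly_natDegree_eq_dim, mc_card] at h1
    exact h1
  have hne : Nonempty V := Fintype.card_pos_iff.mp (by omega)
  haveI : Nonempty (Fin 1 ⊕ Fin s × Fin 2) := ⟨Sum.inl 0⟩
  -- sum of degrees
  have htr : (H.lapMatrix ℝ).trace = ((multicone 1 s 2).lapMatrix ℝ).trace := by
    rw [Matrix.trace_eq_neg_charpoly_coeff, Matrix.trace_eq_neg_charpoly_coeff, hspec, hcard,
      mc_card]
  have hd1 : ∑ v, H.degree v = 6 * s := by
    have h2 : ∑ v, (H.degree v : ℝ) = ∑ v, ((multicone 1 s 2).degree v : ℝ) := by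
      rw [← my_trace_lapMatrix, ← my_trace_lapMatrix, htr]
    have h3 : ((∑ v, H.degree v : ℕ) : ℝ) = ((∑ v, (multicone 1 s 2).degree v : ℕ) : ℝ) := by
      push_cast
      exact h2
    have h4 := Nat.cast_injective (R := ℝ) h3
    rw [h4, mc_sum_degree]
  -- sum of squares of degrees
  have hherm1 : (H.lapMatrix ℝ).IsHermitian := (posSemidef_lapMatrix ℝ H).1
  have hherm2 : ((multicone 1 s 2).lapMatrix ℝ).IsHermitian :=
    (posSemidef_lapMatrix ℝ (multicone 1 s 2)).1
  have htr2 := my_trace_sq_eq hherm1 hherm2 hspec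
  have hd2 : ∑ v, (H.degree v) ^ 2 = 4 * s ^ 2 + 8 * s := by
    rw [my_trace_lapMatrix_sq, my_trace_lapMatrix_sq] at htr2
    have hcast : ((∑ v, (H.degree v) ^ 2 : ℕ) : ℝ) + ((∑ v, H.degree v : ℕ) : ℝ)
        = ((∑ v, ((multicone 1 s 2).degree v) ^ 2 : ℕ) : ℝ)
          + ((∑ v, (multicone 1 s 2).degree v : ℕ) : ℝ) := by
      push_cast
      rw [← Finset.sum_add_distrib, ← Finset.sum_add_distrib]
      exact htr2
    rw [hd1, mc_sum_degree, mc_sum_degree_sq] at hcast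
    have h5 : ((∑ v, (H.degree v) ^ 2 : ℕ) : ℝ) = ((4 * s ^ 2 + 8 * s : ℕ) : ℝ) := by
      push_cast at hcast ⊢
      linarith
    exact Nat.cast_injective (R := ℝ) h5
  -- an eigenvector of the Laplacian of `H` for the eigenvalue `2s+1`
  have hdetF : (Matrix.diagonal (fun _ : Fin 1 ⊕ Fin s × Fin 2 => (2 * s + 1 : ℝ))
      - (multicone 1 s 2).lapMatrix ℝ).det = 0 := by
    rw [← Matrix.exists_mulVec_eq_zero_iff]
    refine ⟨mcEig s, mc_eig_ne_zero s hs, ?_⟩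
    rw [Matrix.sub_mulVec, mc_eig]
    ext u
    simp [Matrix.mulVec_diagonal]
  have hdetH : (Matrix.diagonal (fun _ : V => (2 * s + 1 : ℝ)) - H.lapMatrix ℝ).det = 0 := by
    rw [← my_charpoly_eval, hspec, my_charpoly_eval]
    exact hdetF
  obtain ⟨w, hw0, hwker⟩ := Matrix.exists_mulVec_eq_zero_iff.mpr hdetH
  have hweig : ∀ u, (H.lapMatrix ℝ *ᵥ w) u = (2 * s + 1 : ℝ) * w u := by
    intro u
    have h6 := congrFun hwker u
    rw [Matrix.sub_mulVec] at h6
    have h7 : (2 * s + 1 : ℝ) * w u - (H.lapMatrix ℝ *ᵥ w) u = 0 := by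
      simpa [Matrix.mulVec_diagonal] using h6
    linarith
  -- the eigenvector is orthogonal to the constant vector
  have hwsum : ∑ u, w u = 0 := by
    have h1 : ∑ u, (H.lapMatrix ℝ *ᵥ w) u = (2 * s + 1 : ℝ) * ∑ u, w u := by
      rw [Finset.mul_sum]
      exact Finset.sum_congr rfl (fun u _ => hweig u)
    have h2 : ∑ u, (H.lapMatrix ℝ *ᵥ w) u = 0 := by
      simp only [Matrix.mulVec, dotProduct]
      rw [Finset.sum_comm]
      have h3 : ∀ t, ∑ u, H.lapMatrix ℝ u t * w t = 0 := by
        intro t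
        rw [← Finset.sum_mul, my_lapMatrix_col_sum, zero_mul]
      rw [Finset.sum_congr rfl (fun t _ => h3 t), Finset.sum_const, smul_zero]
    rw [h2] at h1
    have hpos : (2 * s + 1 : ℝ) ≠ 0 := by positivity
    rcases mul_eq_zero.mp h1.symm with h | h
    · exact absurd h hpos
    · exact h
  -- hence the eigenvector is in the kernel of the Laplacian of the complement
  have hnbrsum : ∀ u, ∑ t ∈ H.neighborFinset u, w t
      = (H.degree u : ℝ) * w u - (2 * s + 1) * w u := by
    intro u
    have h8 := hweig u
    rw [SimpleGraph.lapMatrix_mulVec_apply] at h8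
    linarith
  have hcker : (Hᶜ.lapMatrix ℝ) *ᵥ w = 0 := by
    ext u
    rw [SimpleGraph.lapMatrix_mulVec_apply, Pi.zero_apply]
    have humem : u ∉ H.neighborFinset u := by
      rw [mem_neighborFinset]
      exact H.irrefl
    have hset : Hᶜ.neighborFinset u = Finset.univ \ insert u (H.neighborFinset u) := by
      ext t
      rw [mem_neighborFinset, compl_adj, Finset.mem_sdiff, Finset.mem_insert, mem_neighborFinset]
      constructor
      · rintro ⟨h1, h2⟩
        exact ⟨Finset.mem_univ _, fun hc => hc.elim (fun hc1 => h1 hc1.symm) h2⟩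
      · rintro ⟨-, h2⟩
        push_neg at h2
        exact ⟨fun hc => h2.1 hc.symm, h2.2⟩
    have hdlt : H.degree u + 1 ≤ 2 * s + 1 := by
      have := H.degree_lt_card_verts u
      rw [hcard] at this
      omega
    have hdegc : (Hᶜ.degree u : ℝ) = 2 * s - H.degree u := by
      rw [← card_neighborFinset_eq_degree, hset,
        Finset.card_sdiff_of_subset (Finset.subset_univ _), Finset.card_univ, hcard,
        Finset.card_insert_of_notMem humem, card_neighborFinset_eq_degree]
      rw [Nat.cast_sub hdlt]
      push_cast
      ring
    have hsum : ∑ t ∈ Finset.univ \ insert u (H.neighborFinset u), w t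
        = 0 - (w u + ∑ t ∈ H.neighborFinset u, w t) := by
      rw [Finset.sum_sdiff_eq_sub (Finset.subset_univ _), hwsum,
        Finset.sum_insert humem]
    rw [hset, hsum, hdegc, hnbrsum u]
    ring
  -- so the complement is disconnected
  have hnc : ¬ ∀ i j : V, Hᶜ.Reachable i j := by
    intro hall
    have hcon := (SimpleGraph.lapMatrix_mulVec_eq_zero_iff_forall_reachable (G := Hᶜ) (x := w)).mp
      (by exact hcker)
    obtain ⟨u1⟩ := hne
    have hconst : ∀ u, w u = w u1 := fun u => hcon u u1 (hall u u1)
    have h9 : ∑ u, w u = (Fintype.card V : ℝ) * w u1 := by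
      rw [Finset.sum_congr rfl (fun u _ => hconst u), Finset.sum_const, Finset.card_univ,
        nsmul_eq_mul]
    rw [hwsum] at h9
    have hposV : (Fintype.card V : ℝ) ≠ 0 := by
      rw [hcard]
      positivity
    have hw1 : w u1 = 0 := by
      rcases mul_eq_zero.mp h9.symm with h | h
      · exact absurd h hposV
      · exact h
    apply hw0
    funext u
    rw [hconst u, hw1]
    rfl
  push_neg at hnc
  obtain ⟨u0, t0, hnr⟩ := hnc
  letI : DecidablePred (Hᶜ.Reachable u0) := Classical.decPred _
  set S : Finset V := Finset.univ.filter (fun x => Hᶜ.Reachable u0 x) with hS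
  have hu0 : u0 ∈ S := by
    rw [hS, Finset.mem_filter]
    exact ⟨Finset.mem_univ _, Reachable.refl u0⟩
  have ht0 : t0 ∈ Sᶜ := by
    rw [Finset.mem_compl, hS, Finset.mem_filter]
    rintro ⟨-, h⟩
    exact hnr h
  have hjoin : ∀ x ∈ S, ∀ y ∈ Sᶜ, H.Adj x y := by
    intro x hx y hy
    rw [hS, Finset.mem_filter] at hx
    rw [Finset.mem_compl, hS, Finset.mem_filter] at hy
    have hxy : x ≠ y := by
      rintro rfl
      exact hy ⟨Finset.mem_univ _, hx.2⟩
    by_contra hadj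
    have hcadj : Hᶜ.Adj x y := (compl_adj H x y).mpr ⟨hxy, hadj⟩
    exact hy ⟨Finset.mem_univ _, hx.2.trans hcadj.reachable⟩
  obtain ⟨z, hz⟩ := exists_apex_vertex s hs H hcard hd1 hd2 S ⟨u0, hu0⟩ ⟨t0, ht0⟩ hjoin
  exact iso_of_apex s H hcard z hz (apex_unique_nbr s H hcard hd1 hd2 z hz)
end
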